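/- Let α be a positive irrational real number and let φ : Q_{≥0} → P be an injective function into the primes. Let M be the additive submonoid of R_{≥0} generated by {q : q ∈ Q_{≥0}} ∪ {(α + q)/φ(q) : q ∈ Q_{≥0}}. Then (α + q)/φ(q) is an atom of M for every q ∈ Q_{≥0}, M is nearly atomic (with witness α = φ(0)·(α/φ(0)) ∈ M: for every r ∈ M the element α + r is a finite sum of atoms), but M is not atomic, since no nonzero rational element of M is a sum of atoms. -/

import Mathlib

/-- `x` is invertible within the subset `S` of the ambient monoid. -/
def SUnit {A : Type*} [AddCommMonoid A] (S : Set A) (x : A) : Prop := ∃ y ∈ S, x + y = 0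

/-- `a` is an atom of the subset (submonoid) `S`: it is non-invertible in `S` and
cannot be written as a sum of two non-invertible elements of `S`. -/
def SAtom {A : Type*} [AddCommMonoid A] (S : Set A) (a : A) : Prop :=
  a ∈ S ∧ ¬ SUnit S a ∧ ∀ b ∈ S, ∀ c ∈ S, a = b + c → SUnit S b ∨ SUnit S c

/-- `x` is an atomic element of `S`: invertible in `S` or a finite sum of atoms of `S`. -/
def SAtomicElem {A : Type*} [AddCommMonoid A] (S : Set A) (x : A) : Prop :=
  SUnit S x ∨ ∃ l : Multiset A, (∀ a ∈ l, SAtom S a) ∧ l.sum = x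

/-- The subset (submonoid) `S` is atomic. -/
def SAtomic {A : Type*} [AddCommMonoid A] (S : Set A) : Prop :=
  ∀ x ∈ S, SAtomicElem S x

/-- The submonoid of `ℝ_{≥0}` generated by the nonnegative rationals together with
the elements `(α + q)/φ(q)` for nonnegative rational `q`. -/
def M18 (α : ℝ) (φ : ℚ → ℕ) : Set ℝ :=
  (AddSubmonoid.closure
    ({x : ℝ | ∃ q : ℚ, 0 ≤ q ∧ x = (q : ℝ)} ∪
     {x : ℝ | ∃ q : ℚ, 0 ≤ q ∧ x = (α + (q : ℝ)) / (φ q : ℝ)}) : Set ℝ)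

namespace NA18

noncomputable def fA (α : ℝ) (φ : ℚ → ℕ) (r : ℚ) : ℝ := (α + (r : ℝ)) / (φ r : ℝ)

lemma mem_nonneg {α : ℝ} {φ : ℚ → ℕ} (hα : 0 < α) {x : ℝ} (hx : x ∈ M18 α φ) : 0 ≤ x := by
  refine AddSubmonoid.closure_induction (fun x hx => ?_) le_rfl
    (fun x y _ _ hx hy => by linarith) hx
  rcases hx with ⟨q, hq, rfl⟩ | ⟨q, hq, rfl⟩
  · exact_mod_cast hq
  · have hq' : (0:ℝ) ≤ (q:ℝ) := by exact_mod_cast hq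
    exact div_nonneg (by linarith) (by positivity)

lemma sunit_nonpos {α : ℝ} {φ : ℚ → ℕ} (hα : 0 < α) {x : ℝ}
    (hx : SUnit (M18 α φ) x) : x ≤ 0 := by
  obtain ⟨y, hy, hxy⟩ := hx
  have := mem_nonneg hα hy
  linarith

lemma sunit_zero {α : ℝ} {φ : ℚ → ℕ} : SUnit (M18 α φ) 0 :=
  ⟨0, AddSubmonoid.zero_mem _, add_zero 0⟩

lemma rep {α : ℝ} {φ : ℚ → ℕ} {x : ℝ} (hx : x ∈ M18 α φ) :
    ∃ (q : ℚ) (s : Multiset ℚ), 0 ≤ q ∧ (∀ r ∈ s, 0 ≤ r) ∧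
      x = (q : ℝ) + (s.map (fA α φ)).sum := by
  refine AddSubmonoid.closure_induction (fun x hx => ?_) ⟨0, 0, le_rfl, by simp, by simp⟩
    ?_ hx
  · rcases hx with ⟨q, hq, rfl⟩ | ⟨q, hq, rfl⟩
    · exact ⟨q, 0, hq, by simp, by simp⟩
    · exact ⟨0, {q}, le_rfl, by simpa using hq, by simp [fA]⟩
  · rintro x y _ _ ⟨qx, sx, h1, h2, rfl⟩ ⟨qy, sy, h3, h4, rfl⟩
    refine ⟨qx + qy, sx + sy, by linarith, ?_, ?_⟩
    · intro r hr
      rcases Multiset.mem_add.mp hr with hr | hr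
      exacts [h2 r hr, h4 r hr]
    · push_cast
      rw [Multiset.map_add, Multiset.sum_add]
      ring

lemma mem_of_rep {α : ℝ} {φ : ℚ → ℕ} {q : ℚ} {s : Multiset ℚ} (hq : 0 ≤ q)
    (hs : ∀ r ∈ s, 0 ≤ r) : (q : ℝ) + (s.map (fA α φ)).sum ∈ M18 α φ := by
  refine AddSubmonoid.add_mem _ (AddSubmonoid.subset_closure (Or.inl ⟨q, hq, rfl⟩)) ?_
  refine AddSubmonoid.multiset_sum_mem _ _ (fun a ha => ?_)
  obtain ⟨r, hr, rfl⟩ := Multiset.mem_map.mp ha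
  exact AddSubmonoid.subset_closure (Or.inr ⟨r, hs r hr, rfl⟩)

lemma sum_eq {α : ℝ} {φ : ℚ → ℕ} (hφ : ∀ q : ℚ, 0 ≤ q → (φ q).Prime)
    (s : Multiset ℚ) (hs : ∀ r ∈ s, 0 ≤ r) :
    (s.map (fA α φ)).sum =
      (((s.map fun r => (1:ℚ)/(φ r : ℚ)).sum : ℚ) : ℝ) * α +
      (((s.map fun r => (r:ℚ)/(φ r : ℚ)).sum : ℚ) : ℝ) := by
  induction s using Multiset.induction with
  | empty => simp
  | cons a s ih =>
    have ha : 0 ≤ a := hs a (Multiset.mem_cons_self a s)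
    have hs' : ∀ r ∈ s, 0 ≤ r := fun r hr => hs r (Multiset.mem_cons_of_mem hr)
    have hp : ((φ a : ℝ)) ≠ 0 := by exact_mod_cast (hφ a ha).pos.ne'
    have hfa : fA α φ a = (((1:ℚ)/(φ a : ℚ) : ℚ) : ℝ) * α + (((a:ℚ)/(φ a : ℚ) : ℚ) : ℝ) := by
      unfold fA
      push_cast
      field_simp
    simp only [Multiset.map_cons, Multiset.sum_cons, ih hs', hfa]
    push_cast
    ring

lemma coeff_eq {α : ℝ} (hirr : Irrational α) {c c' d d' : ℚ}
    (h : (c : ℝ) * α + d = (c' : ℝ) * α + d') : c = c' ∧ d = d' := by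
  have hc : c = c' := by
    by_contra hne
    have hne' : ((c - c' : ℚ) : ℝ) ≠ 0 := by
      simp only [ne_eq, Rat.cast_eq_zero, sub_eq_zero]; exact hne
    have hα : α = (((d' - d) / (c - c') : ℚ) : ℝ) := by
      have hcc : ((c:ℝ) - c') ≠ 0 := by push_cast at hne'; exact hne'
      push_cast
      field_simp
      linarith [h]
    exact (hirr ⟨(d' - d) / (c - c'), hα.symm⟩).elim
  refine ⟨hc, ?_⟩
  subst hc
  have : (d : ℝ) = d' := by linarith
  exact_mod_cast this

lemma nat_denom {φ : ℚ → ℕ} (hφ : ∀ q : ℚ, 0 ≤ q → (φ q).Prime)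
    (s : Multiset ℚ) (hs : ∀ r ∈ s, 0 ≤ r) :
    ∃ m : ℕ, ((s.map fun r => (1:ℚ)/(φ r : ℚ)).sum) * ((s.map φ).prod : ℚ) = m := by
  induction s using Multiset.induction with
  | empty => exact ⟨0, by simp⟩
  | cons a s ih =>
    have ha : 0 ≤ a := hs a (Multiset.mem_cons_self a s)
    have hs' : ∀ r ∈ s, 0 ≤ r := fun r hr => hs r (Multiset.mem_cons_of_mem hr)
    obtain ⟨m, hm⟩ := ih hs'
    have hp : ((φ a : ℚ)) ≠ 0 := by exact_mod_cast (hφ a ha).pos.ne'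
    refine ⟨(s.map φ).prod + m * φ a, ?_⟩
    simp only [Multiset.map_cons, Multiset.sum_cons, Multiset.prod_cons]
    push_cast
    push_cast at hm
    simp only [Multiset.map_map, Function.comp_apply] at hm ⊢
    field_simp
    linear_combination (φ a : ℚ) * hm

lemma prime_sum {φ : ℚ → ℕ} (hφ : ∀ q : ℚ, 0 ≤ q → (φ q).Prime)
    (hinj : ∀ q r : ℚ, 0 ≤ q → 0 ≤ r → φ q = φ r → q = r)
    {q : ℚ} (hq : 0 ≤ q) {s : Multiset ℚ} (hs : ∀ r ∈ s, 0 ≤ r)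
    (hsum : (s.map fun r => (1:ℚ)/(φ r : ℚ)).sum = 1/(φ q : ℚ)) : s = {q} := by
  have hpq := hφ q hq
  have hp : ((φ q : ℚ)) ≠ 0 := by exact_mod_cast hpq.pos.ne'
  obtain ⟨m, hm⟩ := nat_denom hφ s hs
  rw [hsum] at hm
  have hdvd : φ q ∣ (s.map φ).prod := by
    refine ⟨m, ?_⟩
    have hgoal : ((s.map φ).prod : ℚ) = (φ q : ℚ) * m := by
      field_simp at hm
      push_cast
      simp only [Multiset.map_map, Function.comp_apply] at hm ⊢
      rw [← hm, Nat.cast_multiset_prod, Multiset.map_map]; rfl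
    exact_mod_cast hgoal
  obtain ⟨a, ha, hda⟩ := hpq.prime.exists_mem_multiset_dvd hdvd
  obtain ⟨r, hr, rfl⟩ := Multiset.mem_map.mp ha
  have hrq : r = q := by
    have := (Nat.prime_dvd_prime_iff_eq hpq (hφ r (hs r hr))).mp hda
    exact (hinj r q (hs r hr) hq this.symm)
  subst hrq
  obtain ⟨t, rfl⟩ := Multiset.exists_cons_of_mem hr
  have ht : ∀ r' ∈ t, 0 ≤ r' := fun r' hr' => hs r' (Multiset.mem_cons_of_mem hr')
  simp only [Multiset.map_cons, Multiset.sum_cons] at hsum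
  have hzero : (t.map fun r' => (1:ℚ)/(φ r' : ℚ)).sum = 0 := by linarith
  have htz : t = 0 := by
    by_contra hne
    obtain ⟨r', hr'⟩ := Multiset.exists_mem_of_ne_zero hne
    have hpos : (0:ℚ) < 1/(φ r' : ℚ) := by
      have := (hφ r' (ht r' hr')).pos
      positivity
    have hle : (1:ℚ)/(φ r' : ℚ) ≤ (t.map fun r' => (1:ℚ)/(φ r' : ℚ)).sum := by
      refine Multiset.single_le_sum (fun x hx => ?_) _ (Multiset.mem_map_of_mem _ hr')
      obtain ⟨r'', hr'', rfl⟩ := Multiset.mem_map.mp hx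
      have := (hφ r'' (ht r'' hr'')).pos
      positivity
    linarith
  simp [htz]

lemma atom {α : ℝ} {φ : ℚ → ℕ} (hα : 0 < α) (hirr : Irrational α)
    (hφ : ∀ q : ℚ, 0 ≤ q → (φ q).Prime)
    (hinj : ∀ q r : ℚ, 0 ≤ q → 0 ≤ r → φ q = φ r → q = r)
    {q : ℚ} (hq : 0 ≤ q) : SAtom (M18 α φ) (fA α φ q) := by
  have hqmem : fA α φ q ∈ M18 α φ := AddSubmonoid.subset_closure (Or.inr ⟨q, hq, rfl⟩)
  have h1 : (0:ℝ) ≤ (q:ℝ) := by exact_mod_cast hq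
  have h2 : (0:ℝ) < (φ q : ℝ) := by exact_mod_cast (hφ q hq).pos
  have hApos : 0 < fA α φ q := div_pos (by linarith) h2
  refine ⟨hqmem, fun hu => absurd (sunit_nonpos hα hu) (by linarith), ?_⟩
  rintro b hb c hc heq
  obtain ⟨qb, sb, hqb, hsb, rfl⟩ := rep hb
  obtain ⟨qc, sc, hqc, hsc, rfl⟩ := rep hc
  have hsbc : ∀ r ∈ sb + sc, 0 ≤ r := fun r hr =>
    (Multiset.mem_add.mp hr).elim (hsb r) (hsc r)
  set C2 : ℚ := ((sb + sc).map fun r => (1:ℚ)/(φ r : ℚ)).sum with hC2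
  set D2 : ℚ := ((sb + sc).map fun r => (r:ℚ)/(φ r : ℚ)).sum with hD2
  have hfa : fA α φ q = ((1/(φ q : ℚ) : ℚ) : ℝ) * α + ((q/(φ q : ℚ) : ℚ) : ℝ) := by
    have := sum_eq (α := α) hφ {q} (by simpa using hq)
    simpa using this
  have hsum2 : ((sb + sc).map (fA α φ)).sum = (C2 : ℝ) * α + (D2 : ℝ) :=
    sum_eq hφ _ hsbc
  have hS : (sb.map (fA α φ)).sum + (sc.map (fA α φ)).sum
      = ((sb + sc).map (fA α φ)).sum := by
    rw [Multiset.map_add, Multiset.sum_add]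
  have heq3 : ((1/(φ q:ℚ) : ℚ):ℝ) * α + ((q/(φ q:ℚ) : ℚ):ℝ)
      = (C2 : ℝ) * α + ((qb + qc + D2 : ℚ) : ℝ) := by
    push_cast
    push_cast at hfa hsum2
    linarith [heq, hfa, hsum2, hS]
  obtain ⟨hCeq, hDeq⟩ := coeff_eq hirr heq3
  have hss : sb + sc = {q} := prime_sum hφ hinj hq hsbc hCeq.symm
  have hD2q : D2 = q / (φ q : ℚ) := by rw [hD2, hss]; simp
  have hqbc : qb + qc = 0 := by
    rw [hD2q] at hDeq
    linarith [hDeq]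
  have hqb0 : qb = 0 := le_antisymm (by linarith) hqb
  have hqc0 : qc = 0 := by linarith
  have hcard : Multiset.card sb + Multiset.card sc = 1 := by
    have := congrArg Multiset.card hss
    simpa using this
  rcases (by omega : Multiset.card sb = 0 ∨ Multiset.card sc = 0) with h0 | h0
  · left
    have hsb0 : sb = 0 := Multiset.card_eq_zero.mp h0
    have : (qb : ℝ) + (sb.map (fA α φ)).sum = 0 := by simp [hqb0, hsb0]
    rw [this]; exact sunit_zero
  · right
    have hsc0 : sc = 0 := Multiset.card_eq_zero.mp h0
    have : (qc : ℝ) + (sc.map (fA α φ)).sum = 0 := by simp [hqc0, hsc0]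
    rw [this]; exact sunit_zero

lemma atom_form {α : ℝ} {φ : ℚ → ℕ} (hα : 0 < α)
    (hφ : ∀ q : ℚ, 0 ≤ q → (φ q).Prime)
    {a : ℝ} (ha : SAtom (M18 α φ) a) :
    ∃ c d : ℚ, 0 < c ∧ a = (c:ℝ) * α + (d : ℝ) := by
  obtain ⟨haM, hnu, hsplit⟩ := ha
  obtain ⟨qa, sa, hqa, hsa, rfl⟩ := rep haM
  rcases eq_or_ne sa 0 with h0 | h0
  · exfalso
    subst h0
    simp only [Multiset.map_zero, Multiset.sum_zero, add_zero] at hnu hsplit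
    have hqa0 : qa ≠ 0 := by
      rintro rfl
      exact hnu (by simpa using (sunit_zero (α := α) (φ := φ)))
    have hqa' : (0:ℚ) < qa := lt_of_le_of_ne hqa (Ne.symm hqa0)
    have hbmem : ((qa/2 : ℚ):ℝ) ∈ M18 α φ :=
      AddSubmonoid.subset_closure (Or.inl ⟨qa/2, by positivity, rfl⟩)
    have hdec : (qa : ℝ) = ((qa/2:ℚ):ℝ) + ((qa/2:ℚ):ℝ) := by push_cast; ring
    have hpos : (0:ℝ) < ((qa/2:ℚ):ℝ) := by exact_mod_cast (by positivity : (0:ℚ) < qa/2)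
    rcases hsplit _ hbmem _ hbmem hdec with h | h <;>
      · have := sunit_nonpos hα h
        linarith
  · refine ⟨(sa.map fun r => (1:ℚ)/(φ r:ℚ)).sum,
      qa + (sa.map fun r => (r:ℚ)/(φ r:ℚ)).sum, ?_, ?_⟩
    · obtain ⟨r, hr⟩ := Multiset.exists_mem_of_ne_zero h0
      have hnn : ∀ x ∈ sa.map fun r => (1:ℚ)/(φ r:ℚ), 0 ≤ x := by
        intro x hx
        obtain ⟨r', hr', rfl⟩ := Multiset.mem_map.mp hx
        have := (hφ r' (hsa r' hr')).pos
        positivity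
      have hle := Multiset.single_le_sum hnn _ (Multiset.mem_map_of_mem (fun r => (1:ℚ)/(φ r:ℚ)) hr)
      have hrpos : (0:ℚ) < 1/(φ r:ℚ) := by
        have := (hφ r (hsa r hr)).pos
        positivity
      linarith
    · rw [sum_eq hφ sa hsa]
      push_cast
      ring

lemma sum_atoms {α : ℝ} {φ : ℚ → ℕ} (hα : 0 < α)
    (hφ : ∀ q : ℚ, 0 ≤ q → (φ q).Prime)
    (l : Multiset ℝ) (hl : ∀ a ∈ l, SAtom (M18 α φ) a) :
    ∃ c d : ℚ, (l ≠ 0 → 0 < c) ∧ 0 ≤ c ∧ l.sum = (c:ℝ) * α + (d:ℝ) := by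
  induction l using Multiset.induction with
  | empty => exact ⟨0, 0, fun h => absurd rfl h, le_rfl, by simp⟩
  | cons a l ih =>
    obtain ⟨ca, da, hca, hae⟩ := atom_form hα hφ (hl a (Multiset.mem_cons_self a l))
    obtain ⟨c, d, _, hc0, hle⟩ := ih (fun x hx => hl x (Multiset.mem_cons_of_mem hx))
    refine ⟨ca + c, da + d, fun _ => by linarith, by linarith, ?_⟩
    rw [Multiset.sum_cons, hae, hle]
    push_cast
    ring

end NA18

/-- For a positive irrational `α` and an injection `φ` from `ℚ_{≥0}` into the
primes, the monoid `M = ⟨q, (α + q)/φ(q) : q ∈ ℚ_{≥0}⟩` has each `(α + q)/φ(q)`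
as an atom, is nearly atomic (with witness `α ∈ M`: for every `r ∈ M` the element
`α + r` is a finite sum of atoms), but is not atomic, since no nonzero rational
element of `M` is a sum of atoms. -/
theorem nearly_atomic_not_atomic (α : ℝ) (hα : 0 < α) (hirr : Irrational α)
    (φ : ℚ → ℕ) (hφ : ∀ q : ℚ, 0 ≤ q → (φ q).Prime)
    (hinj : ∀ q r : ℚ, 0 ≤ q → 0 ≤ r → φ q = φ r → q = r) :
    (∀ q : ℚ, 0 ≤ q → SAtom (M18 α φ) ((α + (q : ℝ)) / (φ q : ℝ))) ∧
    α ∈ M18 α φ ∧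
    (∀ r ∈ M18 α φ, ∃ l : Multiset ℝ,
      (∀ a ∈ l, SAtom (M18 α φ) a) ∧ l.sum = α + r) ∧
    ¬ SAtomic (M18 α φ) ∧
    (∀ x ∈ M18 α φ, x ≠ 0 → (∃ q : ℚ, x = (q : ℝ)) →
      ¬ ∃ l : Multiset ℝ, (∀ a ∈ l, SAtom (M18 α φ) a) ∧ l.sum = x) := by
  have atomall : ∀ q : ℚ, 0 ≤ q → SAtom (M18 α φ) ((α + (q:ℝ))/(φ q : ℝ)) :=
    fun q hq => NA18.atom hα hirr hφ hinj hq
  have key5 : ∀ x ∈ M18 α φ, x ≠ 0 → (∃ q : ℚ, x = (q : ℝ)) →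
      ¬ ∃ l : Multiset ℝ, (∀ a ∈ l, SAtom (M18 α φ) a) ∧ l.sum = x := by
    rintro x hxM hx0 ⟨qx, rfl⟩ ⟨l, hl, hsum⟩
    obtain ⟨c, d, hcpos, hc0, hsum'⟩ := NA18.sum_atoms hα hφ l hl
    have hlne : l ≠ 0 := by
      rintro rfl
      simp only [Multiset.sum_zero] at hsum
      exact hx0 hsum.symm
    have hc := hcpos hlne
    have hcR : ((c:ℝ)) ≠ 0 := by exact_mod_cast hc.ne'
    have hx : (c:ℝ) * α + d = (qx:ℝ) := by rw [← hsum', hsum]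
    have hα' : α = (((qx - d)/c : ℚ):ℝ) := by
      push_cast
      field_simp
      linarith [hx]
    exact hirr ⟨(qx - d)/c, hα'.symm⟩
  have hαmem : α ∈ M18 α φ := by
    have hp0 : ((φ 0 : ℝ)) ≠ 0 := by exact_mod_cast (hφ 0 le_rfl).pos.ne'
    have hmem := NA18.mem_of_rep (α := α) (φ := φ) (q := 0)
      (s := Multiset.replicate (φ 0) 0) le_rfl
      (fun r hr => by rw [Multiset.eq_of_mem_replicate hr])
    have hval : ((0:ℚ):ℝ) + ((Multiset.replicate (φ 0) 0).map (NA18.fA α φ)).sum = α := by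
      rw [Multiset.map_replicate, Multiset.sum_replicate, nsmul_eq_mul]
      simp only [NA18.fA, Rat.cast_zero, add_zero, zero_add]
      field_simp
    rwa [hval] at hmem
  have part3 : ∀ r ∈ M18 α φ, ∃ l : Multiset ℝ,
      (∀ a ∈ l, SAtom (M18 α φ) a) ∧ l.sum = α + r := by
    intro r hr
    obtain ⟨q0, s, hq0, hs, rfl⟩ := NA18.rep hr
    refine ⟨Multiset.replicate (φ q0) (NA18.fA α φ q0) + s.map (NA18.fA α φ), ?_, ?_⟩
    · intro a ha
      rcases Multiset.mem_add.mp ha with ha | ha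
      · rw [Multiset.eq_of_mem_replicate ha]
        exact atomall q0 hq0
      · obtain ⟨r', hr', rfl⟩ := Multiset.mem_map.mp ha
        exact atomall r' (hs r' hr')
    · rw [Multiset.sum_add, Multiset.sum_replicate, nsmul_eq_mul]
      have hp : ((φ q0 : ℝ)) ≠ 0 := by exact_mod_cast (hφ q0 hq0).pos.ne'
      have hv : (φ q0 : ℝ) * NA18.fA α φ q0 = α + (q0:ℝ) := by
        rw [NA18.fA]
        field_simp
      rw [hv]
      ring
  have h1mem : (1:ℝ) ∈ M18 α φ :=
    AddSubmonoid.subset_closure (Or.inl ⟨1, by norm_num, by norm_num⟩)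
  have part4 : ¬ SAtomic (M18 α φ) := by
    intro hat
    rcases hat 1 h1mem with h | ⟨l, hl, hsum⟩
    · have := NA18.sunit_nonpos hα h
      linarith
    · exact key5 1 h1mem one_ne_zero ⟨1, by norm_num⟩ ⟨l, hl, hsum⟩
  exact ⟨atomall, hαmem, part3, part4, key5⟩
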